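/- In a complex inner product space, for any vectors z, d, c with c ≠ 0: (‖z‖²‖c‖² − |⟨z, c⟩|²)(‖d‖²‖c‖² − |⟨d, c⟩|²) ≥ |⟨z, d⟩‖c‖² − ⟨z, c⟩⟨c, d⟩|². -/

import Mathlib

open scoped InnerProductSpace RealInnerProductSpace ComplexInnerProductSpace

theorem schwarz_proj_complex {H : Type*} [NormedAddCommGroup H] [InnerProductSpace ℂ H]
    (z d c : H) (hc : c ≠ 0) :
    (‖z‖ ^ 2 * ‖c‖ ^ 2 - ‖⟪z, c⟫_ℂ‖ ^ 2) * (‖d‖ ^ 2 * ‖c‖ ^ 2 - ‖⟪d, c⟫_ℂ‖ ^ 2) ≥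
      ‖⟪z, d⟫_ℂ * (‖c‖ ^ 2 : ℂ) - ⟪z, c⟫_ℂ * ⟪c, d⟫_ℂ‖ ^ 2 := by
  set z' : H := ((‖c‖ : ℂ) ^ 2) • z - ⟪c, z⟫_ℂ • c with hz'
  set d' : H := ((‖c‖ : ℂ) ^ 2) • d - ⟪c, d⟫_ℂ • c with hd'
  have hcz : ⟪c, z⟫_ℂ = starRingEnd ℂ ⟪z, c⟫_ℂ := (inner_conj_symm c z).symm
  have hcd : ⟪c, d⟫_ℂ = starRingEnd ℂ ⟪d, c⟫_ℂ := (inner_conj_symm c d).symm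
  have hcc : ⟪c, c⟫_ℂ = ((‖c‖ : ℂ) ^ 2) := by
    exact inner_self_eq_norm_sq_to_K c
  have key : ∀ x y : H,
      ⟪((‖c‖ : ℂ) ^ 2) • x - ⟪c, x⟫_ℂ • c, ((‖c‖ : ℂ) ^ 2) • y - ⟪c, y⟫_ℂ • c⟫_ℂ
        = ((‖c‖ : ℂ) ^ 2) * (((‖c‖ : ℂ) ^ 2) * ⟪x, y⟫_ℂ - ⟪x, c⟫_ℂ * ⟪c, y⟫_ℂ) := by
    intro x y
    simp only [inner_sub_left, inner_sub_right, inner_smul_left, inner_smul_right, hcc,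
      inner_conj_symm, map_pow, Complex.conj_ofReal]
    ring
  have h1 : ⟪z', d'⟫_ℂ = ((‖c‖ : ℂ) ^ 2) * (⟪z, d⟫_ℂ * ((‖c‖ : ℂ) ^ 2) - ⟪z, c⟫_ℂ * ⟪c, d⟫_ℂ) := by
    rw [hz', hd', key]; ring
  have hz2 : ‖z'‖ ^ 2 = ‖c‖ ^ 2 * (‖z‖ ^ 2 * ‖c‖ ^ 2 - ‖⟪z, c⟫_ℂ‖ ^ 2) := by
    have h := key z z
    rw [← hz'] at h
    have hzz : ⟪z, z⟫_ℂ = (((‖z‖ ^ 2 : ℝ)) : ℂ) := by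
      rw [inner_self_eq_norm_sq_to_K]; norm_cast
    have hzc : ⟪z, c⟫_ℂ * ⟪c, z⟫_ℂ = (((‖⟪z, c⟫_ℂ‖ ^ 2 : ℝ)) : ℂ) := by
      rw [hcz, Complex.mul_conj]
      norm_cast
      rw [Complex.normSq_eq_norm_sq]
    have hself : ⟪z', z'⟫_ℂ = (((‖z'‖ ^ 2 : ℝ)) : ℂ) := by
      rw [inner_self_eq_norm_sq_to_K]; norm_cast
    rw [hself, hzz, hzc] at h
    have hr : (‖z'‖ ^ 2 : ℝ) = ‖c‖ ^ 2 * (‖c‖ ^ 2 * ‖z‖ ^ 2 - ‖⟪z, c⟫_ℂ‖ ^ 2) := by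
      exact_mod_cast h
    rw [hr]; ring
  have hd2 : ‖d'‖ ^ 2 = ‖c‖ ^ 2 * (‖d‖ ^ 2 * ‖c‖ ^ 2 - ‖⟪d, c⟫_ℂ‖ ^ 2) := by
    have h := key d d
    rw [← hd'] at h
    have hdd : ⟪d, d⟫_ℂ = (((‖d‖ ^ 2 : ℝ)) : ℂ) := by
      rw [inner_self_eq_norm_sq_to_K]; norm_cast
    have hdc : ⟪d, c⟫_ℂ * ⟪c, d⟫_ℂ = (((‖⟪d, c⟫_ℂ‖ ^ 2 : ℝ)) : ℂ) := by
      rw [hcd, Complex.mul_conj]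
      norm_cast
      rw [Complex.normSq_eq_norm_sq]
    have hself : ⟪d', d'⟫_ℂ = (((‖d'‖ ^ 2 : ℝ)) : ℂ) := by
      rw [inner_self_eq_norm_sq_to_K]; norm_cast
    rw [hself, hdd, hdc] at h
    have hr : (‖d'‖ ^ 2 : ℝ) = ‖c‖ ^ 2 * (‖c‖ ^ 2 * ‖d‖ ^ 2 - ‖⟪d, c⟫_ℂ‖ ^ 2) := by
      exact_mod_cast h
    rw [hr]; ring
  have hcs : ‖⟪z', d'⟫_ℂ‖ ≤ ‖z'‖ * ‖d'‖ := norm_inner_le_norm z' d'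
  have hcs2 : ‖⟪z', d'⟫_ℂ‖ ^ 2 ≤ ‖z'‖ ^ 2 * ‖d'‖ ^ 2 := by
    rw [← mul_pow]
    exact pow_le_pow_left₀ (norm_nonneg _) hcs 2
  rw [h1, norm_mul, hz2, hd2] at hcs2
  have hc4 : ‖((‖c‖ : ℂ) ^ 2)‖ = ‖c‖ ^ 2 := by
    simp
  rw [hc4, mul_pow] at hcs2
  have hcpos : (0:ℝ) < ‖c‖ ^ 2 := pow_pos (norm_pos_iff.mpr hc) 2
  have h4 : (0:ℝ) < (‖c‖ ^ 2) ^ 2 := pow_pos hcpos 2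
  nlinarith [hcs2, h4]
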